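/- Let μ, λ be constants with μ > 0 and 2μ+λ > 0, and φ₀ the Gaussian heat kernel. Then for each i, j the function φᵢⱼ(x,t) = φ₀(x, μt)δᵢⱼ + ∫_{μt}^{(2μ+λ)t} ∂²φ₀(x,s)/∂xⱼ∂xᵢ ds satisfies, for t > 0 and x ≠ 0, the parabolic Lamé system: ∂φᵢⱼ/∂t − μ Δₙ φᵢⱼ − (λ+μ) ∂/∂xᵢ (Σ_k ∂φ_{kj}/∂x_k) = 0. -/

import Mathlib

/-- The Laplacian on ℝⁿ, as the sum of second partial derivatives. -/
noncomputable def lap {n : ℕ} (f : (Fin n → ℝ) → ℝ) (x : Fin n → ℝ) : ℝ :=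
  ∑ j, fderiv ℝ (fun y => fderiv ℝ f y (Pi.single j 1)) x (Pi.single j 1)

/-- The first partial derivative ∂f/∂xᵢ on ℝⁿ. -/
noncomputable def d1 {n : ℕ} (i : Fin n) (f : (Fin n → ℝ) → ℝ) (x : Fin n → ℝ) : ℝ :=
  fderiv ℝ f x (Pi.single i 1)

/-- The Gaussian heat kernel φ₀(x,t) = (2√(πt))^{−n} e^{−|x|²/(4t)}. -/
noncomputable def phi0 (n : ℕ) (x : Fin n → ℝ) (t : ℝ) : ℝ :=
  ((2 * Real.sqrt (Real.pi * t)) ^ n)⁻¹ * Real.exp (-(∑ i, x i ^ 2) / (4 * t))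

/-- The components φᵢⱼ(x,t) = φ₀(x,μt)δᵢⱼ + ∫_{μt}^{(2μ+λ)t} ∂²φ₀(x,s)/∂xⱼ∂xᵢ ds of the
fundamental solution of the parabolic Lamé operator. -/
noncomputable def PhiL (n : ℕ) (μ lam : ℝ) (i j : Fin n) (x : Fin n → ℝ) (t : ℝ) : ℝ :=
  phi0 n x (μ * t) * (if i = j then 1 else 0)
    + ∫ s in (μ * t)..((2 * μ + lam) * t),
        d1 j (fun y => d1 i (fun z => phi0 n z s) y) x

open Real MeasureTheory Set intervalIntegral Metric
open scoped Topology Interval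
noncomputable section
namespace LameAux
variable {n : ℕ}

def toCLM (v : Fin n → ℝ) : (Fin n → ℝ) →L[ℝ] ℝ := ∑ i, v i • ContinuousLinearMap.proj i

lemma toCLM_apply (v w : Fin n → ℝ) : toCLM v w = ∑ i, v i * w i := by
  simp [toCLM, ContinuousLinearMap.sum_apply, smul_eq_mul]

@[simp] lemma toCLM_apply_single (v : Fin n → ℝ) (k : Fin n) :
    toCLM v (Pi.single k 1) = v k := by
  rw [toCLM_apply, Finset.sum_eq_single k]
  · simp
  · intro b _ hb; simp [Pi.single_apply, hb]
  · simp

lemma smul_toCLM (c : ℝ) (v : Fin n → ℝ) : c • toCLM v = toCLM (fun k => c * v k) := by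
  apply ContinuousLinearMap.ext; intro w
  simp [toCLM_apply, Finset.mul_sum, mul_assoc]

lemma toCLM_add (v w : Fin n → ℝ) : toCLM v + toCLM w = toCLM (fun k => v k + w k) := by
  apply ContinuousLinearMap.ext; intro u
  simp [toCLM_apply, add_mul, Finset.sum_add_distrib]

lemma toCLM_sum {ι : Type*} (s : Finset ι) (v : ι → Fin n → ℝ) :
    ∑ i ∈ s, toCLM (v i) = toCLM (fun k => ∑ i ∈ s, v i k) := by
  apply ContinuousLinearMap.ext; intro u
  simp [toCLM_apply, Finset.sum_mul]
  rw [Finset.sum_comm]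

lemma continuous_toCLM : Continuous (toCLM (n := n)) := by
  unfold toCLM
  exact continuous_finset_sum _ fun i _ => ((continuous_apply i).smul continuous_const)

lemma toCLM_kd (i : Fin n) :
    toCLM (fun k => if k = i then (1:ℝ) else 0) = ContinuousLinearMap.proj i := by
  apply ContinuousLinearMap.ext; intro w
  rw [toCLM_apply, Finset.sum_eq_single i] <;> simp +contextual

lemma hasFDerivAt_coord (i : Fin n) (x : Fin n → ℝ) :
    HasFDerivAt (fun y : Fin n → ℝ => y i)
      (toCLM (fun k => if k = i then (1:ℝ) else 0)) x := by
  rw [toCLM_kd]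
  exact (ContinuousLinearMap.proj (R := ℝ) (φ := fun _ : Fin n => ℝ) i).hasFDerivAt

/-- congruence helper -/
lemma hfd_congr {f : (Fin n → ℝ) → ℝ} {v w : Fin n → ℝ} {x : Fin n → ℝ}
    (h : HasFDerivAt f (toCLM v) x) (hvw : ∀ k, v k = w k) :
    HasFDerivAt f (toCLM w) x := by
  have : v = w := funext hvw
  rwa [this] at h

/-! ### coefficient functions -/

def kd (i j : Fin n) : ℝ := if i = j then 1 else 0

def qf (x : Fin n → ℝ) : ℝ := ∑ i, x i ^ 2

def A1 (i : Fin n) (x : Fin n → ℝ) (s : ℝ) : ℝ := -(x i) / (2*s)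

def A2 (i j : Fin n) (x : Fin n → ℝ) (s : ℝ) : ℝ :=
  x i * x j / (4*s^2) - kd i j / (2*s)

def A3 (k i j : Fin n) (x : Fin n → ℝ) (s : ℝ) : ℝ :=
  (kd k i * x j + kd k j * x i) / (4*s^2) + A2 i j x s * A1 k x s

def A4 (l k i j : Fin n) (x : Fin n → ℝ) (s : ℝ) : ℝ :=
  (kd k i * kd l j + kd k j * kd l i) / (4*s^2)
    + (kd l i * x j + kd l j * x i) / (4*s^2) * A1 k x s
    + A2 i j x s * (-(kd l k) / (2*s))
    + A3 k i j x s * A1 l x s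

lemma hasFDerivAt_qf (x : Fin n → ℝ) :
    HasFDerivAt qf (toCLM fun k => 2 * x k) x := by
  have h : ∀ i : Fin n, HasFDerivAt (fun y : Fin n → ℝ => y i ^ 2)
      (toCLM fun k => 2 * x i * (if k = i then (1:ℝ) else 0)) x := by
    intro i
    have := (hasFDerivAt_coord i x).fun_mul (hasFDerivAt_coord i x)
    simp only [smul_toCLM, toCLM_add] at this
    apply hfd_congr (by simpa [pow_two] using this)
    intro k; by_cases h : k = i <;> simp [h] <;> ring
  have h2 := HasFDerivAt.fun_sum (fun i (_ : i ∈ Finset.univ) => h i)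
  rw [toCLM_sum] at h2
  have h3 : HasFDerivAt qf (toCLM fun k => ∑ i : Fin n, 2 * x i * if k = i then 1 else 0) x := by
    exact h2
  exact hfd_congr h3 (fun k => by rw [Finset.sum_eq_single k] <;> simp +contextual [eq_comm])

lemma hasFDerivAt_phi0_x {s : ℝ} (hs : 0 < s) (x : Fin n → ℝ) :
    HasFDerivAt (fun y => phi0 n y s)
      (toCLM fun k => A1 k x s * phi0 n x s) x := by
  have h0 := (hasFDerivAt_qf x).const_mul (-(4*s)⁻¹)
  simp only [smul_toCLM] at h0
  have h1 : HasFDerivAt (fun y : Fin n → ℝ => -(qf y) / (4*s))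
      (toCLM fun k => -(4*s)⁻¹ * (2 * x k)) x := by
    have efun : (fun y : Fin n → ℝ => -(qf y) / (4*s)) = fun y => -(4*s)⁻¹ * qf y := by
      funext y; ring
    rw [efun]; exact h0
  have h2 := h1.exp
  simp only [smul_toCLM] at h2
  have h3 := h2.const_mul (((2 * Real.sqrt (Real.pi * s)) ^ n)⁻¹)
  simp only [smul_toCLM] at h3
  have h4 : HasFDerivAt (fun y => phi0 n y s)
      (toCLM fun k => ((2 * Real.sqrt (Real.pi * s)) ^ n)⁻¹ *
        (Real.exp (-(qf x) / (4*s)) * (-(4*s)⁻¹ * (2 * x k)))) x := by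
    simpa [phi0, qf] using h3
  refine hfd_congr h4 (fun k => ?_)
  simp only [phi0, qf, A1]
  have hs' : (s:ℝ) ≠ 0 := ne_of_gt hs
  field_simp
  ring

end LameAux

namespace LameAux
variable {n : ℕ}

lemma hasFDerivAt_mul_phi0 {p : (Fin n → ℝ) → ℝ} {g : Fin n → ℝ} {x : Fin n → ℝ} {s : ℝ}
    (hp : HasFDerivAt p (toCLM g) x) (hs : 0 < s) :
    HasFDerivAt (fun y => p y * phi0 n y s)
      (toCLM fun k => (g k + p x * A1 k x s) * phi0 n x s) x := by
  have h := hp.mul (hasFDerivAt_phi0_x hs x)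
  simp only [smul_toCLM, toCLM_add] at h
  exact hfd_congr h (fun k => by ring)

lemma hasFDerivAt_A1 (i : Fin n) (x : Fin n → ℝ) (s : ℝ) :
    HasFDerivAt (fun y => A1 i y s) (toCLM fun k => -(kd k i) / (2*s)) x := by
  have h := (hasFDerivAt_coord i x).const_mul (-(2*s)⁻¹)
  simp only [smul_toCLM] at h
  have efun : (fun y : Fin n → ℝ => A1 i y s) = fun y => -(2*s)⁻¹ * y i := by
    funext y; simp only [A1]; ring
  rw [efun]
  refine hfd_congr h (fun k => ?_)
  simp only [kd]; by_cases hk : k = i <;> simp [hk] <;> ring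

lemma hasFDerivAt_A2 (i j : Fin n) (x : Fin n → ℝ) (s : ℝ) :
    HasFDerivAt (fun y => A2 i j y s)
      (toCLM fun k => (kd k i * x j + kd k j * x i) / (4*s^2)) x := by
  have hm := (hasFDerivAt_coord i x).mul (hasFDerivAt_coord j x)
  simp only [smul_toCLM, toCLM_add] at hm
  have h := (hm.const_mul ((4*s^2)⁻¹)).sub_const (kd i j / (2*s))
  simp only [smul_toCLM] at h
  have efun : (fun y : Fin n → ℝ => A2 i j y s)
      = fun y => (4*s^2)⁻¹ * (y i * y j) - kd i j / (2*s) := by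
    funext y; simp only [A2]; ring
  rw [efun]
  refine hfd_congr h (fun k => ?_)
  simp only [kd]; by_cases h1 : k = i <;> by_cases h2 : k = j <;> simp [h1, h2] <;> ring

lemma hasFDerivAt_A3 (k i j : Fin n) (x : Fin n → ℝ) (s : ℝ) :
    HasFDerivAt (fun y => A3 k i j y s)
      (toCLM fun l => (kd k i * kd l j + kd k j * kd l i) / (4*s^2)
        + (kd l i * x j + kd l j * x i) / (4*s^2) * A1 k x s
        + A2 i j x s * (-(kd l k) / (2*s))) x := by
  have hP : HasFDerivAt (fun y : Fin n → ℝ => (kd k i * y j + kd k j * y i) / (4*s^2))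
      (toCLM fun l => (kd k i * kd l j + kd k j * kd l i) / (4*s^2)) x := by
    have h1 := ((hasFDerivAt_coord j x).const_mul (kd k i)).add
      ((hasFDerivAt_coord i x).const_mul (kd k j))
    have h2 := h1.const_mul ((4*s^2)⁻¹)
    simp only [smul_toCLM, toCLM_add] at h2
    have efun : (fun y : Fin n → ℝ => (kd k i * y j + kd k j * y i) / (4*s^2))
        = fun y => (4*s^2)⁻¹ * (kd k i * y j + kd k j * y i) := by funext y; ring
    rw [efun]
    refine hfd_congr h2 (fun l => ?_)
    simp only [kd]
    by_cases h1 : l = i <;> by_cases h2 : l = j <;> simp [h1, h2] <;> ring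
  have hmul := (hasFDerivAt_A2 i j x s).mul (hasFDerivAt_A1 k x s)
  simp only [smul_toCLM, toCLM_add] at hmul
  have h := hP.add hmul
  simp only [toCLM_add] at h
  have efun : (fun y : Fin n → ℝ => A3 k i j y s)
      = fun y => (kd k i * y j + kd k j * y i) / (4*s^2) + A2 i j y s * A1 k y s := by
    funext y; simp only [A3]
  rw [efun]
  exact hfd_congr h (fun l => by ring)

lemma hasFDerivAt_F1 {s : ℝ} (hs : 0 < s) (i : Fin n) (x : Fin n → ℝ) :
    HasFDerivAt (fun y => A1 i y s * phi0 n y s)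
      (toCLM fun k => A2 k i x s * phi0 n x s) x := by
  refine hfd_congr (hasFDerivAt_mul_phi0 (hasFDerivAt_A1 i x s) hs) (fun k => ?_)
  have hs' : s ≠ 0 := ne_of_gt hs
  simp only [A1, A2]
  field_simp
  ring

lemma hasFDerivAt_F2 {s : ℝ} (hs : 0 < s) (i j : Fin n) (x : Fin n → ℝ) :
    HasFDerivAt (fun y => A2 i j y s * phi0 n y s)
      (toCLM fun k => A3 k i j x s * phi0 n x s) x := by
  exact hfd_congr (hasFDerivAt_mul_phi0 (hasFDerivAt_A2 i j x s) hs) (fun k => by simp only [A3])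

lemma hasFDerivAt_F3 {s : ℝ} (hs : 0 < s) (k i j : Fin n) (x : Fin n → ℝ) :
    HasFDerivAt (fun y => A3 k i j y s * phi0 n y s)
      (toCLM fun l => A4 l k i j x s * phi0 n x s) x := by
  exact hfd_congr (hasFDerivAt_mul_phi0 (hasFDerivAt_A3 k i j x s) hs) (fun l => by simp only [A4])

/-! ### sum identities -/

lemma sum_kd_left (i : Fin n) (f : Fin n → ℝ) : ∑ k, kd k i * f k = f i := by
  rw [Finset.sum_eq_single i]
  · simp [kd]
  · intro b _ hb; simp [kd, hb]
  · simp

lemma sum_A2_diag (x : Fin n → ℝ) (s : ℝ) :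
    ∑ k, A2 k k x s = qf x / (4*s^2) - n / (2*s) := by
  have e : ∀ k : Fin n, A2 k k x s = x k ^ 2 / (4*s^2) - 1/(2*s) := by
    intro k; simp only [A2, kd, eq_self_iff_true, if_true]; ring
  rw [Finset.sum_congr rfl (fun k _ => e k), Finset.sum_sub_distrib]
  simp only [Finset.sum_const, Finset.card_univ, Fintype.card_fin, nsmul_eq_mul, qf]
  rw [← Finset.sum_div]
  ring

lemma sum_A3_diag (j : Fin n) (x : Fin n → ℝ) (s : ℝ) (hs : s ≠ 0) :
    ∑ k, A3 k k j x s = x j / (2*s^2) + A1 j x s * (qf x / (4*s^2) - n / (2*s)) := by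
  have e : ∀ k : Fin n, A3 k k j x s
      = x j/(4*s^2) - x j/(8*s^3) * x k^2 + kd k j * (x k/(2*s^2)) := by
    intro k
    by_cases hk : k = j
    · subst hk; simp only [A3, A2, A1, kd, if_pos rfl, eq_self_iff_true, if_true]; field_simp; ring
    · simp only [A3, A2, A1, kd, if_pos rfl, if_neg hk, eq_self_iff_true, if_true]; field_simp; ring
  rw [Finset.sum_congr rfl (fun k _ => e k), Finset.sum_add_distrib,
    Finset.sum_sub_distrib, sum_kd_left j (fun k => x k / (2*s^2))]
  simp only [Finset.sum_const, Finset.card_univ, Fintype.card_fin, nsmul_eq_mul, qf, A1]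
  rw [← Finset.mul_sum]
  field_simp
  ring

lemma sum_A4_diag (i j : Fin n) (x : Fin n → ℝ) (s : ℝ) (hs : s ≠ 0) :
    ∑ k, A4 k k i j x s
      = (-(x i * x j) / (2*s^3) + kd i j / (2*s^2))
        + A2 i j x s * (qf x / (4*s^2) - n / (2*s)) := by
  have e : ∀ k : Fin n, A4 k k i j x s
      = kd k i * (kd k j / (2*s^2)) + kd k i * (-(x j) * x k / (4*s^3))
        + kd k j * (-(x i) * x k / (4*s^3))
        + A2 i j x s * (x k^2 / (4*s^2)) - A2 i j x s / (2*s) := by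
    intro k
    by_cases h1 : k = i
    · subst h1
      by_cases h2 : k = j
      · subst h2
        simp only [A4, A3, A1, kd, eq_self_iff_true, if_true]; field_simp; ring
      · simp only [A4, A3, A1, kd, eq_self_iff_true, if_true, if_neg h2]; field_simp; ring
    · by_cases h2 : k = j
      · subst h2
        simp only [A4, A3, A1, kd, eq_self_iff_true, if_true, if_neg h1]; field_simp; ring
      · simp only [A4, A3, A1, kd, eq_self_iff_true, if_true, if_neg h1, if_neg h2]
        field_simp; ring
  rw [Finset.sum_congr rfl (fun k _ => e k)]
  rw [Finset.sum_sub_distrib, Finset.sum_add_distrib, Finset.sum_add_distrib,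
    Finset.sum_add_distrib, sum_kd_left i (fun k => kd k j / (2*s^2)),
    sum_kd_left i (fun k => -(x j) * x k / (4*s^3)),
    sum_kd_left j (fun k => -(x i) * x k / (4*s^3))]
  have h4 : ∑ k : Fin n, A2 i j x s * (x k ^ 2 / (4*s^2)) = A2 i j x s / (4*s^2) * qf x := by
    rw [qf, Finset.mul_sum]; exact Finset.sum_congr rfl fun k _ => by ring
  rw [h4]
  simp only [Finset.sum_const, Finset.card_univ, Fintype.card_fin, nsmul_eq_mul]
  field_simp
  ring

end LameAux

namespace LameAux
variable {n : ℕ}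

/-! ### derivatives in the time variable -/

lemma hasDerivAt_phi0_t (hn : n ≠ 0) (x : Fin n → ℝ) {s : ℝ} (hs : 0 < s) :
    HasDerivAt (fun t => phi0 n x t)
      ((qf x / (4*s^2) - n / (2*s)) * phi0 n x s) s := by
  obtain ⟨m, rfl⟩ := Nat.exists_eq_succ_of_ne_zero hn
  set r := Real.sqrt (Real.pi * s) with hr
  have hπs : 0 < Real.pi * s := by positivity
  have hr0 : 0 < r := Real.sqrt_pos.2 hπs
  have hr2 : r^2 = Real.pi * s := Real.sq_sqrt (le_of_lt hπs)
  have hsq : HasDerivAt (fun t => Real.sqrt (Real.pi * t)) (1 / (2*r) * Real.pi) s := by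
    have h1 : HasDerivAt (fun t : ℝ => Real.pi * t) Real.pi s := by
      simpa using (hasDerivAt_id s).const_mul Real.pi
    exact (Real.hasDerivAt_sqrt (ne_of_gt hπs)).comp s h1
  have hu : HasDerivAt (fun t => 2 * Real.sqrt (Real.pi * t)) (2 * (1 / (2*r) * Real.pi)) s :=
    hsq.const_mul 2
  have hupow := hu.pow (m+1)
  have hune : (2 * Real.sqrt (Real.pi * s)) ^ (m+1) ≠ 0 := by positivity
  have hinv := hupow.inv hune
  have hgexp : HasDerivAt (fun t : ℝ => -(qf x)/(4*t)) (qf x / (4*s^2)) s := by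
    have h1 : HasDerivAt (fun t : ℝ => t⁻¹) (-(s^2)⁻¹) s := hasDerivAt_inv (ne_of_gt hs)
    have h2 := h1.const_mul (-(qf x)/4)
    have efun : (fun t : ℝ => -(qf x)/(4*t)) = fun t => (-(qf x)/4) * t⁻¹ := by
      funext t; rw [div_eq_mul_inv, div_eq_mul_inv, mul_inv]; ring
    rw [efun]
    refine h2.congr_deriv ?_
    field_simp
  have hexp := hgexp.exp
  have hmul := hinv.mul hexp
  have efun : (fun t => phi0 (m+1) x t)
      = fun t => ((2 * Real.sqrt (Real.pi * t)) ^ (m+1))⁻¹ * Real.exp (-(qf x)/(4*t)) := by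
    funext t; rfl
  rw [efun]
  have hφ : phi0 (m+1) x s = ((2 * Real.sqrt (Real.pi * s)) ^ (m+1))⁻¹
      * Real.exp (-(qf x)/(4*s)) := rfl
  refine hmul.congr_deriv ?_
  rw [hφ]
  have hπ : Real.pi = r^2 / s := (eq_div_iff (ne_of_gt hs)).2 (by linarith)
  simp only [Pi.pow_apply, Pi.inv_apply, ← hr, Nat.add_sub_cancel]
  rw [pow_succ]
  push_cast
  rw [hπ]
  field_simp
  ring

end LameAux

namespace LameAux
variable {n : ℕ}

lemma hasDerivAt_A1t (j : Fin n) (x : Fin n → ℝ) {s : ℝ} (hs : s ≠ 0) :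
    HasDerivAt (fun t => A1 j x t) (x j / (2*s^2)) s := by
  have h1 := (hasDerivAt_inv hs).const_mul (-(x j)/2)
  have efun : (fun t : ℝ => A1 j x t) = fun t => (-(x j)/2) * t⁻¹ := by
    funext t; simp only [A1]; rw [div_eq_mul_inv, div_eq_mul_inv, mul_inv]; ring
  rw [efun]
  refine h1.congr_deriv ?_
  field_simp

lemma hasDerivAt_A2t (i j : Fin n) (x : Fin n → ℝ) {s : ℝ} (hs : s ≠ 0) :
    HasDerivAt (fun t => A2 i j x t)
      (-(x i * x j) / (2*s^3) + kd i j / (2*s^2)) s := by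
  have hsq : HasDerivAt (fun t : ℝ => t^2) (2*s) s := by
    simpa using hasDerivAt_pow 2 s
  have hsqne : s^2 ≠ 0 := pow_ne_zero 2 hs
  have h1 := (hsq.inv hsqne).const_mul (x i * x j / 4)
  have h2 := (hasDerivAt_inv hs).const_mul (kd i j / 2)
  have h := h1.sub h2
  have efun : (fun t : ℝ => A2 i j x t)
      = fun t => (x i * x j / 4) * (t^2)⁻¹ - (kd i j / 2) * t⁻¹ := by
    funext t; simp only [A2]
    rw [div_eq_mul_inv (x i * x j), div_eq_mul_inv (kd i j), mul_inv, mul_inv]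
    ring
  rw [efun]
  refine h.congr_deriv ?_
  field_simp
  ring

/-- time derivative of `A1 j x s * phi0 n x s` -/
lemma hasDerivAt_F1t (hn : n ≠ 0) (j : Fin n) (x : Fin n → ℝ) {s : ℝ} (hs : 0 < s) :
    HasDerivAt (fun t => A1 j x t * phi0 n x t)
      (x j / (2*s^2) * phi0 n x s
        + A1 j x s * ((qf x / (4*s^2) - n / (2*s)) * phi0 n x s)) s :=
  (hasDerivAt_A1t j x (ne_of_gt hs)).mul (hasDerivAt_phi0_t hn x hs)

/-- time derivative of `A2 i j x s * phi0 n x s` -/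
lemma hasDerivAt_F2t (hn : n ≠ 0) (i j : Fin n) (x : Fin n → ℝ) {s : ℝ} (hs : 0 < s) :
    HasDerivAt (fun t => A2 i j x t * phi0 n x t)
      ((-(x i * x j) / (2*s^3) + kd i j / (2*s^2)) * phi0 n x s
        + A2 i j x s * ((qf x / (4*s^2) - n / (2*s)) * phi0 n x s)) s :=
  (hasDerivAt_A2t i j x (ne_of_gt hs)).mul (hasDerivAt_phi0_t hn x hs)

/-! ### continuity -/

def PS : Set ((Fin n → ℝ) × ℝ) := Set.univ ×ˢ Set.Ioi (0:ℝ)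

lemma continuousOn_phi0 :
    ContinuousOn (fun p : (Fin n → ℝ) × ℝ => phi0 n p.1 p.2) PS := by
  apply ContinuousOn.mul
  · apply ContinuousOn.inv₀
    · exact (((continuous_const.mul
        (Real.continuous_sqrt.comp (continuous_const.mul continuous_snd))).pow n)).continuousOn
    · rintro ⟨x, s⟩ ⟨-, hs⟩
      have : (0:ℝ) < s := hs
      positivity
  · apply Real.continuous_exp.comp_continuousOn
    apply ContinuousOn.div
    · exact (continuous_neg.comp (continuous_finset_sum _ fun i _ =>
        (continuous_apply i).comp continuous_fst |>.pow 2)).continuousOn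
    · exact (continuous_const.mul continuous_snd).continuousOn
    · rintro ⟨x, s⟩ ⟨-, hs⟩
      have : (0:ℝ) < s := hs
      positivity

lemma continuousOn_snd_pow_ne (m : ℕ) (c : ℝ) :
    ∀ p : (Fin n → ℝ) × ℝ, p ∈ PS → c * p.2 ^ m ≠ 0 → True := fun _ _ _ => trivial

lemma continuousOn_A1 (i : Fin n) :
    ContinuousOn (fun p : (Fin n → ℝ) × ℝ => A1 i p.1 p.2) PS := by
  apply ContinuousOn.div
  · exact (continuous_neg.comp ((continuous_apply i).comp continuous_fst)).continuousOn
  · exact (continuous_const.mul continuous_snd).continuousOn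
  · rintro ⟨x, s⟩ ⟨-, hs⟩
    have : (0:ℝ) < s := hs
    positivity

lemma continuousOn_A2 (i j : Fin n) :
    ContinuousOn (fun p : (Fin n → ℝ) × ℝ => A2 i j p.1 p.2) PS := by
  apply ContinuousOn.sub
  · apply ContinuousOn.div
    · exact (((continuous_apply i).comp continuous_fst).mul
        ((continuous_apply j).comp continuous_fst)).continuousOn
    · exact (continuous_const.mul (continuous_snd.pow 2)).continuousOn
    · rintro ⟨x, s⟩ ⟨-, hs⟩
      have : (0:ℝ) < s := hs
      positivity
  · apply ContinuousOn.div
    · exact continuousOn_const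
    · exact (continuous_const.mul continuous_snd).continuousOn
    · rintro ⟨x, s⟩ ⟨-, hs⟩
      have : (0:ℝ) < s := hs
      positivity

lemma continuousOn_A3 (k i j : Fin n) :
    ContinuousOn (fun p : (Fin n → ℝ) × ℝ => A3 k i j p.1 p.2) PS := by
  apply ContinuousOn.add
  · apply ContinuousOn.div
    · exact ((continuous_const.mul ((continuous_apply j).comp continuous_fst)).add
        (continuous_const.mul ((continuous_apply i).comp continuous_fst))).continuousOn
    · exact (continuous_const.mul (continuous_snd.pow 2)).continuousOn
    · rintro ⟨x, s⟩ ⟨-, hs⟩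
      have : (0:ℝ) < s := hs
      positivity
  · exact (continuousOn_A2 i j).mul (continuousOn_A1 k)

lemma continuousOn_A4 (l k i j : Fin n) :
    ContinuousOn (fun p : (Fin n → ℝ) × ℝ => A4 l k i j p.1 p.2) PS := by
  have hden2 : ∀ p : (Fin n → ℝ) × ℝ, p ∈ PS → (4:ℝ) * p.2 ^ 2 ≠ 0 := by
    rintro ⟨x, s⟩ ⟨-, hs⟩
    have : (0:ℝ) < s := hs
    positivity
  have hden1 : ∀ p : (Fin n → ℝ) × ℝ, p ∈ PS → (2:ℝ) * p.2 ≠ 0 := by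
    rintro ⟨x, s⟩ ⟨-, hs⟩
    have : (0:ℝ) < s := hs
    positivity
  apply ContinuousOn.add
  apply ContinuousOn.add
  apply ContinuousOn.add
  · exact ContinuousOn.div continuousOn_const
      (continuous_const.mul (continuous_snd.pow 2)).continuousOn hden2
  · refine ContinuousOn.mul (ContinuousOn.div ?_
      (continuous_const.mul (continuous_snd.pow 2)).continuousOn hden2) (continuousOn_A1 k)
    exact ((continuous_const.mul ((continuous_apply j).comp continuous_fst)).add
      (continuous_const.mul ((continuous_apply i).comp continuous_fst))).continuousOn
  · exact (continuousOn_A2 i j).mul (ContinuousOn.div continuousOn_const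
      (continuous_const.mul continuous_snd).continuousOn hden1)
  · exact (continuousOn_A3 k i j).mul (continuousOn_A1 l)

end LameAux

namespace LameAux
variable {n : ℕ}

lemma intervalIntegral_clm_apply {a b : ℝ} {f : ℝ → ((Fin n → ℝ) →L[ℝ] ℝ)}
    (hf : IntervalIntegrable f volume a b) (v : Fin n → ℝ) :
    (∫ s in a..b, f s) v = ∫ s in a..b, f s v := by
  simp only [intervalIntegral]
  rw [ContinuousLinearMap.sub_apply, ContinuousLinearMap.integral_apply hf.1,
    ContinuousLinearMap.integral_apply hf.2]

lemma uIcc_subset_Ioi {a b : ℝ} (ha : 0 < a) (hb : 0 < b) :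
    Set.uIcc a b ⊆ Set.Ioi 0 := fun s hs => lt_of_lt_of_le (lt_min ha hb) hs.1

lemma hasFDerivAt_param {a b : ℝ} (ha : 0 < a) (hb : 0 < b)
    (F : (Fin n → ℝ) → ℝ → ℝ) (F' : (Fin n → ℝ) → ℝ → ((Fin n → ℝ) →L[ℝ] ℝ))
    (hF : ContinuousOn (fun p : (Fin n → ℝ) × ℝ => F p.1 p.2) PS)
    (hF' : ContinuousOn (fun p : (Fin n → ℝ) × ℝ => F' p.1 p.2) PS)
    (hdiff : ∀ (y : Fin n → ℝ) (s : ℝ), 0 < s → HasFDerivAt (fun z => F z s) (F' y s) y)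
    (x : Fin n → ℝ) :
    HasFDerivAt (fun y => ∫ s in a..b, F y s) (∫ s in a..b, F' x s) x := by
  have hsub : Set.uIcc a b ⊆ Set.Ioi 0 := uIcc_subset_Ioi ha hb
  have hsub' : Set.uIoc a b ⊆ Set.Ioi 0 := fun s hs => hsub (uIoc_subset_uIcc hs)
  have hmapsTo : ∀ y : Fin n → ℝ, Set.MapsTo (fun s => (y, s)) (Set.uIcc a b) PS :=
    fun y s hs => ⟨Set.mem_univ _, hsub hs⟩
  have hFs : ∀ y : Fin n → ℝ, ContinuousOn (fun s => F y s) (Set.uIcc a b) := fun y =>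
    hF.comp (Continuous.continuousOn (by fun_prop)) (hmapsTo y)
  have hF's : ContinuousOn (fun s => F' x s) (Set.uIcc a b) :=
    hF'.comp (Continuous.continuousOn (by fun_prop)) (hmapsTo x)
  -- bound on compact set
  have hK : IsCompact (Metric.closedBall x 1 ×ˢ Set.uIcc a b) :=
    (isCompact_closedBall x 1).prod isCompact_uIcc
  have hKsub : (Metric.closedBall x 1 ×ˢ Set.uIcc a b) ⊆ PS := fun p hp =>
    ⟨Set.mem_univ _, hsub hp.2⟩
  obtain ⟨C, hC⟩ := hK.exists_bound_of_continuousOn (hF'.mono hKsub)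
  apply intervalIntegral.hasFDerivAt_integral_of_dominated_of_fderiv_le
    (bound := fun _ => C) (s := Metric.ball x 1) (Metric.ball_mem_nhds x one_pos)
  · exact Filter.Eventually.of_forall fun y =>
      ((hFs y).mono (Set.uIoc_subset_uIcc)).aestronglyMeasurable measurableSet_uIoc
  · exact (hFs x).intervalIntegrable
  · exact ((hF's.mono Set.uIoc_subset_uIcc).aestronglyMeasurable measurableSet_uIoc)
  · refine Filter.Eventually.of_forall fun s hs y hy => ?_
    exact hC (y, s) ⟨Metric.ball_subset_closedBall hy, uIoc_subset_uIcc hs⟩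
  · exact intervalIntegrable_const
  · exact Filter.Eventually.of_forall fun s hs y _ => hdiff y s (hsub' hs)

lemma hasDerivAt_int_endpoints (g : ℝ → ℝ) (hg : ContinuousOn g (Set.Ioi 0))
    {μ c t : ℝ} (hμ : 0 < μ) (hc : 0 < c) (ht : 0 < t) :
    HasDerivAt (fun u => ∫ s in (μ*u)..(c*u), g s) (c * g (c*t) - μ * g (μ*t)) t := by
  have hInt : ∀ p q : ℝ, 0 < p → 0 < q → IntervalIntegrable g volume p q := fun p q hp hq =>
    (hg.mono (uIcc_subset_Ioi hp hq)).intervalIntegrable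
  have hmeas : ∀ z : ℝ, 0 < z → StronglyMeasurableAtFilter g (𝓝 z) volume := fun z hz =>
    ContinuousOn.stronglyMeasurableAtFilter isOpen_Ioi hg z hz
  have hca : ∀ z : ℝ, 0 < z → ContinuousAt g z := fun z hz =>
    hg.continuousAt (isOpen_Ioi.mem_nhds hz)
  have h1 : HasDerivAt (fun v => ∫ s in (μ*t)..v, g s) (g (c*t)) (c*t) :=
    intervalIntegral.integral_hasDerivAt_right (hInt _ _ (by positivity) (by positivity))
      (hmeas _ (by positivity)) (hca _ (by positivity))
  have h2 : HasDerivAt (fun v => ∫ s in (μ*t)..v, g s) (g (μ*t)) (μ*t) :=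
    intervalIntegral.integral_hasDerivAt_right (hInt _ _ (by positivity) (by positivity))
      (hmeas _ (by positivity)) (hca _ (by positivity))
  have hlin1 : HasDerivAt (fun u : ℝ => c * u) c t := by
    simpa using (hasDerivAt_id t).const_mul c
  have hlin2 : HasDerivAt (fun u : ℝ => μ * u) μ t := by
    simpa using (hasDerivAt_id t).const_mul μ
  have hG : HasDerivAt
      (fun u => (∫ s in (μ*t)..(c*u), g s) - ∫ s in (μ*t)..(μ*u), g s)
      (g (c*t) * c - g (μ*t) * μ) t := (h1.comp t hlin1).sub (h2.comp t hlin2)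
  have heq : (fun u => ∫ s in (μ*u)..(c*u), g s)
      =ᶠ[𝓝 t] (fun u => (∫ s in (μ*t)..(c*u), g s) - ∫ s in (μ*t)..(μ*u), g s) := by
    filter_upwards [isOpen_Ioi.mem_nhds ht] with u hu
    have hu' : (0:ℝ) < u := hu
    rw [← intervalIntegral.integral_add_adjacent_intervals
      (hInt (μ*t) (μ*u) (by positivity) (by positivity))
      (hInt (μ*u) (c*u) (by positivity) (by positivity))]
    ring
  have := hG.congr_of_eventuallyEq heq
  refine this.congr_deriv ?_
  ring

end LameAux

namespace LameAux
variable {n : ℕ}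

lemma d1_eq {f : (Fin n → ℝ) → ℝ} {L : (Fin n → ℝ) →L[ℝ] ℝ} {x : Fin n → ℝ}
    (h : HasFDerivAt f L x) (k : Fin n) : d1 k f x = L (Pi.single k 1) := by
  show fderiv ℝ f x (Pi.single k 1) = L (Pi.single k 1)
  rw [h.fderiv]

lemma contOn_slice {α : Type*} [TopologicalSpace α] {G : (Fin n → ℝ) × ℝ → α}
    (hG : ContinuousOn G PS) (x : Fin n → ℝ) :
    ContinuousOn (fun s => G (x, s)) (Set.Ioi 0) := by
  apply hG.comp (Continuous.continuousOn (by fun_prop))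
  intro s hs
  exact ⟨Set.mem_univ _, hs⟩

lemma contF2 (i j : Fin n) :
    ContinuousOn (fun p : (Fin n → ℝ) × ℝ => A2 i j p.1 p.2 * phi0 n p.1 p.2) PS :=
  (continuousOn_A2 i j).mul continuousOn_phi0

lemma contF1 (i : Fin n) :
    ContinuousOn (fun p : (Fin n → ℝ) × ℝ => A1 i p.1 p.2 * phi0 n p.1 p.2) PS :=
  (continuousOn_A1 i).mul continuousOn_phi0

lemma contF3 (k i j : Fin n) :
    ContinuousOn (fun p : (Fin n → ℝ) × ℝ => A3 k i j p.1 p.2 * phi0 n p.1 p.2) PS :=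
  (continuousOn_A3 k i j).mul continuousOn_phi0

lemma contDF2 (i j : Fin n) :
    ContinuousOn (fun p : (Fin n → ℝ) × ℝ =>
      toCLM (fun k => A3 k i j p.1 p.2 * phi0 n p.1 p.2)) PS := by
  apply continuous_toCLM.comp_continuousOn
  rw [continuousOn_pi]
  exact fun k => contF3 k i j

lemma contDF3 (k i j : Fin n) :
    ContinuousOn (fun p : (Fin n → ℝ) × ℝ =>
      toCLM (fun l => A4 l k i j p.1 p.2 * phi0 n p.1 p.2)) PS := by
  apply continuous_toCLM.comp_continuousOn
  rw [continuousOn_pi]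
  exact fun l => (continuousOn_A4 l k i j).mul continuousOn_phi0

lemma hasFDerivAt_int_F2 {a b : ℝ} (ha : 0 < a) (hb : 0 < b) (i j : Fin n) (x : Fin n → ℝ) :
    HasFDerivAt (fun y => ∫ s in a..b, A2 i j y s * phi0 n y s)
      (∫ s in a..b, toCLM (fun k => A3 k i j x s * phi0 n x s)) x :=
  hasFDerivAt_param ha hb _ _ (contF2 i j) (contDF2 i j)
    (fun y s hs => hasFDerivAt_F2 hs i j y) x

lemma hasFDerivAt_int_F3 {a b : ℝ} (ha : 0 < a) (hb : 0 < b) (k i j : Fin n) (x : Fin n → ℝ) :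
    HasFDerivAt (fun y => ∫ s in a..b, A3 k i j y s * phi0 n y s)
      (∫ s in a..b, toCLM (fun l => A4 l k i j x s * phi0 n x s)) x :=
  hasFDerivAt_param ha hb _ _ (contF3 k i j) (contDF3 k i j)
    (fun y s hs => hasFDerivAt_F3 hs k i j y) x

lemma II_DF2 {a b : ℝ} (ha : 0 < a) (hb : 0 < b) (i j : Fin n) (x : Fin n → ℝ) :
    IntervalIntegrable (fun s => toCLM (fun k => A3 k i j x s * phi0 n x s)) volume a b :=
  ((contOn_slice (contDF2 i j) x).mono (uIcc_subset_Ioi ha hb)).intervalIntegrable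

lemma II_DF3 {a b : ℝ} (ha : 0 < a) (hb : 0 < b) (k i j : Fin n) (x : Fin n → ℝ) :
    IntervalIntegrable (fun s => toCLM (fun l => A4 l k i j x s * phi0 n x s)) volume a b :=
  ((contOn_slice (contDF3 k i j) x).mono (uIcc_subset_Ioi ha hb)).intervalIntegrable

lemma int_DF2_apply {a b : ℝ} (ha : 0 < a) (hb : 0 < b) (i j k : Fin n) (x : Fin n → ℝ) :
    (∫ s in a..b, toCLM (fun k => A3 k i j x s * phi0 n x s)) (Pi.single k 1)
      = ∫ s in a..b, A3 k i j x s * phi0 n x s := by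
  rw [intervalIntegral_clm_apply (II_DF2 ha hb i j x)]
  exact intervalIntegral.integral_congr fun s _ => by simp

lemma int_DF3_apply {a b : ℝ} (ha : 0 < a) (hb : 0 < b) (k i j l : Fin n) (x : Fin n → ℝ) :
    (∫ s in a..b, toCLM (fun l => A4 l k i j x s * phi0 n x s)) (Pi.single l 1)
      = ∫ s in a..b, A4 l k i j x s * phi0 n x s := by
  rw [intervalIntegral_clm_apply (II_DF3 ha hb k i j x)]
  exact intervalIntegral.integral_congr fun s _ => by simp

lemma A2_symm (i j : Fin n) (x : Fin n → ℝ) (s : ℝ) : A2 i j x s = A2 j i x s := by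
  simp only [A2, kd]
  rw [mul_comm]
  congr 1
  by_cases h : i = j
  · simp [h]
  · rw [if_neg h, if_neg (fun hh => h hh.symm)]

/-- Rewriting the integrand of `PhiL` in explicit form. -/
lemma d1d1_phi0 (i j : Fin n) (y : Fin n → ℝ) {s : ℝ} (hs : 0 < s) :
    d1 j (fun y' => d1 i (fun z => phi0 n z s) y') y = A2 i j y s * phi0 n y s := by
  have e : (fun y' => d1 i (fun z => phi0 n z s) y') = fun y' => A1 i y' s * phi0 n y' s := by
    funext y'
    rw [d1_eq (hasFDerivAt_phi0_x hs y') i, toCLM_apply_single]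
  rw [e, d1_eq (hasFDerivAt_F1 hs i y) j, toCLM_apply_single, A2_symm]

end LameAux

namespace LameAux
variable {n : ℕ}

lemma FTC_F2 (hn : n ≠ 0) (i j : Fin n) (x : Fin n → ℝ) {a b : ℝ} (ha : 0 < a) (hb : 0 < b) :
    ∫ s in a..b, ((-(x i * x j) / (2*s^3) + kd i j / (2*s^2)) * phi0 n x s
        + A2 i j x s * ((qf x / (4*s^2) - n / (2*s)) * phi0 n x s))
      = A2 i j x b * phi0 n x b - A2 i j x a * phi0 n x a := by
  have hsub := uIcc_subset_Ioi ha hb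
  apply intervalIntegral.integral_eq_sub_of_hasDerivAt
  · exact fun s hs => hasDerivAt_F2t hn i j x (hsub hs)
  · apply ContinuousOn.intervalIntegrable
    have hφ : ContinuousOn (fun s => phi0 n x s) (Set.uIcc a b) :=
      (contOn_slice continuousOn_phi0 x).mono hsub
    have hA2 : ContinuousOn (fun s => A2 i j x s) (Set.uIcc a b) :=
      (contOn_slice (continuousOn_A2 i j) x).mono hsub
    have hne3 : ∀ s ∈ Set.uIcc a b, (2:ℝ)*s^3 ≠ 0 := fun s hs => by
      have : (0:ℝ) < s := hsub hs; positivity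
    have hne2 : ∀ s ∈ Set.uIcc a b, (2:ℝ)*s^2 ≠ 0 := fun s hs => by
      have : (0:ℝ) < s := hsub hs; positivity
    have hne4 : ∀ s ∈ Set.uIcc a b, (4:ℝ)*s^2 ≠ 0 := fun s hs => by
      have : (0:ℝ) < s := hsub hs; positivity
    have hne1 : ∀ s ∈ Set.uIcc a b, (2:ℝ)*s ≠ 0 := fun s hs => by
      have : (0:ℝ) < s := hsub hs; positivity
    apply ContinuousOn.add
    · exact (ContinuousOn.add
        (ContinuousOn.div continuousOn_const (by fun_prop) hne3)
        (ContinuousOn.div continuousOn_const (by fun_prop) hne2)).mul hφ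
    · exact hA2.mul ((ContinuousOn.sub
        (ContinuousOn.div continuousOn_const (by fun_prop) hne4)
        (ContinuousOn.div continuousOn_const (by fun_prop) hne1)).mul hφ)

lemma FTC_F1 (hn : n ≠ 0) (j : Fin n) (x : Fin n → ℝ) {a b : ℝ} (ha : 0 < a) (hb : 0 < b) :
    ∫ s in a..b, (x j / (2*s^2) * phi0 n x s
        + A1 j x s * ((qf x / (4*s^2) - n / (2*s)) * phi0 n x s))
      = A1 j x b * phi0 n x b - A1 j x a * phi0 n x a := by
  have hsub := uIcc_subset_Ioi ha hb
  apply intervalIntegral.integral_eq_sub_of_hasDerivAt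
  · exact fun s hs => hasDerivAt_F1t hn j x (hsub hs)
  · apply ContinuousOn.intervalIntegrable
    have hφ : ContinuousOn (fun s => phi0 n x s) (Set.uIcc a b) :=
      (contOn_slice continuousOn_phi0 x).mono hsub
    have hA1 : ContinuousOn (fun s => A1 j x s) (Set.uIcc a b) :=
      (contOn_slice (continuousOn_A1 j) x).mono hsub
    have hne2 : ∀ s ∈ Set.uIcc a b, (2:ℝ)*s^2 ≠ 0 := fun s hs => by
      have : (0:ℝ) < s := hsub hs; positivity
    have hne4 : ∀ s ∈ Set.uIcc a b, (4:ℝ)*s^2 ≠ 0 := fun s hs => by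
      have : (0:ℝ) < s := hsub hs; positivity
    have hne1 : ∀ s ∈ Set.uIcc a b, (2:ℝ)*s ≠ 0 := fun s hs => by
      have : (0:ℝ) < s := hsub hs; positivity
    apply ContinuousOn.add
    · exact (ContinuousOn.div (by fun_prop) (by fun_prop) hne2).mul hφ
    · exact hA1.mul ((ContinuousOn.sub
        (ContinuousOn.div continuousOn_const (by fun_prop) hne4)
        (ContinuousOn.div continuousOn_const (by fun_prop) hne1)).mul hφ)

lemma II_F3 {a b : ℝ} (ha : 0 < a) (hb : 0 < b) (k i j : Fin n) (x : Fin n → ℝ) :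
    IntervalIntegrable (fun s => A3 k i j x s * phi0 n x s) volume a b :=
  ((contOn_slice (contF3 k i j) x).mono (uIcc_subset_Ioi ha hb)).intervalIntegrable

lemma II_F4 {a b : ℝ} (ha : 0 < a) (hb : 0 < b) (l k i j : Fin n) (x : Fin n → ℝ) :
    IntervalIntegrable (fun s => A4 l k i j x s * phi0 n x s) volume a b :=
  ((contOn_slice ((continuousOn_A4 l k i j).mul continuousOn_phi0) x).mono
    (uIcc_subset_Ioi ha hb)).intervalIntegrable

lemma sum_int_A4 (hn : n ≠ 0) (i j : Fin n) (x : Fin n → ℝ) {a b : ℝ}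
    (ha : 0 < a) (hb : 0 < b) :
    ∑ k, ∫ s in a..b, A4 k k i j x s * phi0 n x s
      = A2 i j x b * phi0 n x b - A2 i j x a * phi0 n x a := by
  rw [← intervalIntegral.integral_finset_sum (μ := volume) (fun k _ => II_F4 ha hb k k i j x)]
  rw [← FTC_F2 hn i j x ha hb]
  apply intervalIntegral.integral_congr
  intro s hs
  have hs0 : (0:ℝ) < s := uIcc_subset_Ioi ha hb hs
  show ∑ k : Fin n, A4 k k i j x s * phi0 n x s = _
  rw [← Finset.sum_mul, sum_A4_diag i j x s (ne_of_gt hs0)]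
  ring

lemma sum_int_A3diag (hn : n ≠ 0) (j : Fin n) (x : Fin n → ℝ) {a b : ℝ}
    (ha : 0 < a) (hb : 0 < b) :
    ∑ k, ∫ s in a..b, A3 k k j x s * phi0 n x s
      = A1 j x b * phi0 n x b - A1 j x a * phi0 n x a := by
  rw [← intervalIntegral.integral_finset_sum (μ := volume) (fun k _ => II_F3 ha hb k k j x)]
  rw [← FTC_F1 hn j x ha hb]
  apply intervalIntegral.integral_congr
  intro s hs
  have hs0 : (0:ℝ) < s := uIcc_subset_Ioi ha hb hs
  show ∑ k : Fin n, A3 k k j x s * phi0 n x s = _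
  rw [← Finset.sum_mul, sum_A3_diag j x s (ne_of_gt hs0)]
  ring

/-- PhiL in explicit form. -/
lemma ePhiL {μ lam : ℝ} (hμ : 0 < μ) (hc : 0 < 2*μ+lam) (i j : Fin n) (y : Fin n → ℝ)
    {t : ℝ} (ht : 0 < t) :
    PhiL n μ lam i j y t = phi0 n y (μ*t) * kd i j
      + ∫ s in (μ*t)..((2*μ+lam)*t), A2 i j y s * phi0 n y s := by
  have h1 : (if i = j then (1:ℝ) else 0) = kd i j := rfl
  simp only [PhiL, h1]
  congr 1
  apply intervalIntegral.integral_congr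
  intro s hs
  exact d1d1_phi0 i j y (uIcc_subset_Ioi (by positivity) (by positivity) hs)

end LameAux

namespace LameAux
variable {n : ℕ}

lemma deriv_PhiL (hn : n ≠ 0) {μ lam t : ℝ} (hμ : 0 < μ) (hc : 0 < 2*μ+lam) (ht : 0 < t)
    (i j : Fin n) (x : Fin n → ℝ) :
    deriv (fun u => PhiL n μ lam i j x u) t
      = μ * ((qf x / (4*(μ*t)^2) - n / (2*(μ*t))) * phi0 n x (μ*t)) * kd i j
        + ((2*μ+lam) * (A2 i j x ((2*μ+lam)*t) * phi0 n x ((2*μ+lam)*t))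
           - μ * (A2 i j x (μ*t) * phi0 n x (μ*t))) := by
  have hμt : 0 < μ*t := by positivity
  have h_a : HasDerivAt (fun u => phi0 n x (μ*u) * kd i j)
      (μ * ((qf x / (4*(μ*t)^2) - n / (2*(μ*t))) * phi0 n x (μ*t)) * kd i j) t := by
    have hφ := hasDerivAt_phi0_t hn x hμt
    have hlin : HasDerivAt (fun u : ℝ => μ*u) μ t := by
      simpa using (hasDerivAt_id t).const_mul μ
    have h := (hφ.comp t hlin).mul_const (kd i j)
    refine h.congr_deriv ?_
    ring
  have h_b := hasDerivAt_int_endpoints (fun s => A2 i j x s * phi0 n x s)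
      (contOn_slice (contF2 i j) x) hμ hc ht
  have h := h_a.add h_b
  have heq : (fun u => PhiL n μ lam i j x u) =ᶠ[𝓝 t]
      (fun u => phi0 n x (μ*u) * kd i j
        + ∫ s in (μ*u)..((2*μ+lam)*u), A2 i j x s * phi0 n x s) := by
    filter_upwards [isOpen_Ioi.mem_nhds ht] with u hu
    exact ePhiL hμ hc i j x hu
  exact (h.congr_of_eventuallyEq heq).deriv

lemma lap_PhiL (hn : n ≠ 0) {μ lam t : ℝ} (hμ : 0 < μ) (hc : 0 < 2*μ+lam) (ht : 0 < t)
    (i j : Fin n) (x : Fin n → ℝ) :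
    lap (fun y => PhiL n μ lam i j y t) x
      = kd i j * ((qf x / (4*(μ*t)^2) - n / (2*(μ*t))) * phi0 n x (μ*t))
        + (A2 i j x ((2*μ+lam)*t) * phi0 n x ((2*μ+lam)*t)
           - A2 i j x (μ*t) * phi0 n x (μ*t)) := by
  have hμt : 0 < μ*t := by positivity
  have hct : 0 < (2*μ+lam)*t := by positivity
  have efun : (fun y => PhiL n μ lam i j y t)
      = fun y => phi0 n y (μ*t) * kd i j
        + ∫ s in (μ*t)..((2*μ+lam)*t), A2 i j y s * phi0 n y s :=
    funext fun y => ePhiL hμ hc i j y ht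
  have hinner : ∀ (k : Fin n) (y : Fin n → ℝ),
      fderiv ℝ (fun y => PhiL n μ lam i j y t) y (Pi.single k 1)
        = kd i j * (A1 k y (μ*t) * phi0 n y (μ*t))
          + ∫ s in (μ*t)..((2*μ+lam)*t), A3 k i j y s * phi0 n y s := by
    intro k y
    rw [efun]
    have h := ((hasFDerivAt_phi0_x hμt y).mul_const (kd i j)).fun_add
      (hasFDerivAt_int_F2 hμt hct i j y)
    rw [h.fderiv, ContinuousLinearMap.add_apply, ContinuousLinearMap.smul_apply,
      toCLM_apply_single, int_DF2_apply hμt hct i j k y, smul_eq_mul]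
  have eouter : ∀ k : Fin n,
      (fun y => fderiv ℝ (fun y' => PhiL n μ lam i j y' t) y (Pi.single k 1))
        = fun y => kd i j * (A1 k y (μ*t) * phi0 n y (μ*t))
          + ∫ s in (μ*t)..((2*μ+lam)*t), A3 k i j y s * phi0 n y s :=
    fun k => funext (hinner k)
  have hterm : ∀ k : Fin n,
      fderiv ℝ (fun y => fderiv ℝ (fun y' => PhiL n μ lam i j y' t) y (Pi.single k 1)) x
          (Pi.single k 1)
        = kd i j * (A2 k k x (μ*t) * phi0 n x (μ*t))
          + ∫ s in (μ*t)..((2*μ+lam)*t), A4 k k i j x s * phi0 n x s := by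
    intro k
    rw [eouter k]
    have h := ((hasFDerivAt_F1 hμt k x).const_mul (kd i j)).fun_add
      (hasFDerivAt_int_F3 hμt hct k i j x)
    rw [h.fderiv, ContinuousLinearMap.add_apply, ContinuousLinearMap.smul_apply,
      toCLM_apply_single, int_DF3_apply hμt hct k i j k x, smul_eq_mul]
  show ∑ k, fderiv ℝ (fun y => fderiv ℝ (fun y' => PhiL n μ lam i j y' t) y (Pi.single k 1)) x
      (Pi.single k 1) = _
  rw [Finset.sum_congr rfl (fun k _ => hterm k), Finset.sum_add_distrib,
    sum_int_A4 hn i j x hμt hct]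
  have e1 : ∑ k : Fin n, kd i j * (A2 k k x (μ*t) * phi0 n x (μ*t))
      = kd i j * ((∑ k : Fin n, A2 k k x (μ*t)) * phi0 n x (μ*t)) := by
    rw [Finset.sum_mul, Finset.mul_sum]
  rw [e1, sum_A2_diag]

lemma div_PhiL (hn : n ≠ 0) {μ lam t : ℝ} (hμ : 0 < μ) (hc : 0 < 2*μ+lam) (ht : 0 < t)
    (i j : Fin n) (x : Fin n → ℝ) :
    d1 i (fun y => ∑ k, d1 k (fun z => PhiL n μ lam k j z t) y) x
      = A2 i j x ((2*μ+lam)*t) * phi0 n x ((2*μ+lam)*t) := by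
  have hμt : 0 < μ*t := by positivity
  have hct : 0 < (2*μ+lam)*t := by positivity
  have hsum : ∀ y : Fin n → ℝ, (∑ k, d1 k (fun z => PhiL n μ lam k j z t) y)
      = A1 j y ((2*μ+lam)*t) * phi0 n y ((2*μ+lam)*t) := by
    intro y
    have hterm : ∀ k : Fin n, d1 k (fun z => PhiL n μ lam k j z t) y
        = kd k j * (A1 k y (μ*t) * phi0 n y (μ*t))
          + ∫ s in (μ*t)..((2*μ+lam)*t), A3 k k j y s * phi0 n y s := by
      intro k
      have efun : (fun z => PhiL n μ lam k j z t)
          = fun z => phi0 n z (μ*t) * kd k j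
            + ∫ s in (μ*t)..((2*μ+lam)*t), A2 k j z s * phi0 n z s :=
        funext fun z => ePhiL hμ hc k j z ht
      rw [efun]
      have h := ((hasFDerivAt_phi0_x hμt y).mul_const (kd k j)).fun_add
        (hasFDerivAt_int_F2 hμt hct k j y)
      rw [d1_eq h k, ContinuousLinearMap.add_apply, ContinuousLinearMap.smul_apply,
        toCLM_apply_single, int_DF2_apply hμt hct k j k y, smul_eq_mul]
    rw [Finset.sum_congr rfl (fun k _ => hterm k), Finset.sum_add_distrib,
      sum_kd_left j (fun k => A1 k y (μ*t) * phi0 n y (μ*t)),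
      sum_int_A3diag hn j y hμt hct]
    ring
  rw [funext hsum, d1_eq (hasFDerivAt_F1 hct j x) i, toCLM_apply_single]

end LameAux


end

/-- For t > 0 and x ≠ 0, the matrix (φᵢⱼ) satisfies the constant-coefficient parabolic
Lamé system ∂φᵢⱼ/∂t − μΔφᵢⱼ − (λ+μ)∂/∂xᵢ(Σ_k ∂φ_{kj}/∂x_k) = 0. -/
theorem lame_fundamental_solution (n : ℕ) (hn : 2 ≤ n) (μ lam : ℝ)
    (hμ : 0 < μ) (hc : 0 < 2 * μ + lam) (i j : Fin n) :
    ∀ (x : Fin n → ℝ) (t : ℝ), 0 < t → x ≠ 0 →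
      deriv (fun s => PhiL n μ lam i j x s) t
        - μ * lap (fun y => PhiL n μ lam i j y t) x
        - (lam + μ) * d1 i (fun y => ∑ k, d1 k (fun z => PhiL n μ lam k j z t) y) x
        = 0 := by
  intro x t ht _hx
  have hn0 : n ≠ 0 := by omega
  rw [LameAux.deriv_PhiL hn0 hμ hc ht i j x, LameAux.lap_PhiL hn0 hμ hc ht i j x,
    LameAux.div_PhiL hn0 hμ hc ht i j x]
  ring
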